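/- Let n ≥ 1 and let E : Fin n → ℝ be positive and nonincreasing, S_k = ∑_{j=1}^k 1/E_j, r the smallest index maximizing (k - 1/2)/S_k, and μ as above. Then E_k·(1 - μ_k) = (r - 1/2)/S_r for all k ≤ r, and E_k·(1 - μ_k) ≤ (r - 1/2)/S_r for all k > r. -/

import Mathlib

open Finset

/-- E_k (1-μ_k) equals (r-1/2)/S_r for k ≤ r and is at most it for k > r. -/
theorem stmt2 (n : ℕ) (hn : 0 < n) (E : Fin n → ℝ)
    (hEpos : ∀ k, 0 < E k)
    (hEmono : ∀ k l : Fin n, k ≤ l → E l ≤ E k)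
    (S : Fin n → ℝ) (hS : ∀ k, S k = ∑ j ∈ Finset.Iic k, 1 / E j)
    (φ : Fin n → ℝ) (hφ : ∀ k, φ k = (((k.val : ℝ) + 1) - 1/2) / S k)
    (r : Fin n) (hr_max : ∀ k, φ k ≤ φ r)
    (hr_min : ∀ k, φ k = φ r → r ≤ k)
    (μ : Fin n → ℝ)
    (hμ : ∀ k, μ k = if k ≤ r then 1 - (1 / E k) * φ r else 0) :
    (∀ k, k ≤ r → E k * (1 - μ k) = φ r) ∧
    (∀ k, r < k → E k * (1 - μ k) ≤ φ r) := by
  have hSpos : ∀ k, 0 < S k := by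
    intro k
    rw [hS k]
    apply Finset.sum_pos
    · intro j _
      have := hEpos j
      positivity
    · exact ⟨k, Finset.mem_Iic.mpr le_rfl⟩
  constructor
  · intro k hk
    rw [hμ k, if_pos hk]
    have := (hEpos k).ne'
    field_simp
    ring
  · intro k hk
    rw [hμ k, if_neg (not_le.mpr hk)]
    simp only [sub_zero, mul_one]
    by_contra hlt
    push_neg at hlt
    have hkv : r.val < k.val := hk
    have hjlt : r.val + 1 < n := lt_of_le_of_lt hkv k.isLt
    set j : Fin n := ⟨r.val + 1, hjlt⟩ with hj
    have hjk : j ≤ k := by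
      simp only [Fin.le_def, hj]
      omega
    have hEj : φ r < E j := lt_of_lt_of_le hlt (hEmono j k hjk)
    have hSj : S j = S r + 1 / E j := by
      rw [hS j, hS r]
      have hins : Finset.Iic j = insert j (Finset.Iic r) := by
        ext a
        simp only [Finset.mem_Iic, Finset.mem_insert, Fin.le_def, Fin.ext_iff, hj]
        omega
      rw [hins, Finset.sum_insert (by simp [Fin.le_def, hj])]
      ring
    have hmax := hr_max j
    rw [hφ j, hφ r] at hmax
    set a : ℝ := ((r.val : ℝ) + 1) - 1/2 with ha
    have hapos : 0 < a := by
      have : (0:ℝ) ≤ (r.val : ℝ) := Nat.cast_nonneg _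
      rw [ha]; linarith
    have hSr := hSpos r
    have hEjpos := hEpos j
    have hkey : a < E j * S r := by
      rw [hφ r] at hEj
      rw [div_lt_iff₀ hSr] at hEj
      exact hEj
    have hjval : ((j.val : ℝ) + 1) - 1/2 = a + 1 := by
      simp only [hj, ha]
      push_cast
      ring
    rw [hjval, hSj] at hmax
    have hden : 0 < S r + 1 / E j := by positivity
    rw [div_le_div_iff₀ hden hSr] at hmax
    have h1 : a / E j < S r := by
      rw [div_lt_iff₀ hEjpos]
      nlinarith
    have h2 : a * (1 / E j) = a / E j := by ring
    nlinarith
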